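/- arXiv:2002.00821 — 5 statements merged into one kernel-verified Lean document; each statement's English description precedes it below -/
import Mathlib

section
/- Let R be a commutative ring with identity, G a multiplicative subgroup of the unit group U(R), and S a non-empty subset of G closed under inverses. Then every vertex x of the generalized unit and unitary Cayley graph Γ(R, G, S) satisfies |G| − 1 ≤ deg(x) ≤ |G|·|S|. -/
namespace CrosscapDef

open SimpleGraph

variable {V : Type*}

/-- An embedding scheme (rotation system together with an edge signature) for a simple
graph `G`: `rot` cyclically permutes the darts around each vertex (a single cycle at every
vertex), and `sgn d = true` means the edge of `d` is orientation-reversing. -/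
structure Scheme {V : Type*} (G : SimpleGraph V) where
  rot : Equiv.Perm G.Dart
  rot_fst : ∀ d : G.Dart, (rot d).toProd.1 = d.toProd.1
  rot_single : ∀ d e : G.Dart, d.toProd.1 = e.toProd.1 → rot.SameCycle d e
  sgn : G.Dart → Bool
  sgn_symm : ∀ d : G.Dart, sgn d.symm = sgn d

/-- Crossing an edge: reverse the dart and flip the local orientation according to the
signature. -/
def Scheme.flip {G : SimpleGraph V} (σ : Scheme G) : Equiv.Perm (G.Dart × Bool) :=
  Function.Involutive.toPerm (fun p => (p.1.symm, xor p.2 (σ.sgn p.1)))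
    (by
      rintro ⟨d, s⟩
      simp [SimpleGraph.Dart.symm_symm, σ.sgn_symm, Bool.xor_assoc])

/-- Turning around a vertex: apply the rotation or its inverse, depending on the current
local orientation. -/
def Scheme.step {G : SimpleGraph V} (σ : Scheme G) : Equiv.Perm (G.Dart × Bool) where
  toFun p := (cond p.2 (σ.rot p.1) (σ.rot.symm p.1), p.2)
  invFun p := (cond p.2 (σ.rot.symm p.1) (σ.rot p.1), p.2)
  left_inv := by rintro ⟨d, s⟩; cases s <;> simp
  right_inv := by rintro ⟨d, s⟩; cases s <;> simp

/-- The face-tracing permutation of an embedding scheme. -/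
def Scheme.facePerm {G : SimpleGraph V} (σ : Scheme G) : Equiv.Perm (G.Dart × Bool) :=
  σ.step * σ.flip

/-- The number of cycles (orbits) of a permutation. -/
noncomputable def cycleCount {α : Type*} (f : Equiv.Perm α) : ℕ :=
  Nat.card (Quotient (Setoid.mk f.SameCycle
    ⟨fun _ => Equiv.Perm.SameCycle.rfl, Equiv.Perm.SameCycle.symm, Equiv.Perm.SameCycle.trans⟩))

/-- The number of faces of an embedding scheme: each face is traced twice by `facePerm`. -/
noncomputable def Scheme.faceCount {G : SimpleGraph V} (σ : Scheme G) : ℕ :=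
  cycleCount σ.facePerm / 2

/-- The Euler genus `2 - v + e - f` of (the surface of) an embedding scheme of a connected
graph. -/
noncomputable def Scheme.eulerGenus {G : SimpleGraph V} (σ : Scheme G) : ℤ :=
  2 - (Nat.card V : ℤ) + ((Nat.card G.Dart / 2 : ℕ) : ℤ) - (σ.faceCount : ℤ)

/-- An embedding scheme is orientable iff its signature is switching-equivalent to the
all-positive signature. -/
def Scheme.Orientable {G : SimpleGraph V} (σ : Scheme G) : Prop :=
  ∃ f : V → Bool, ∀ d : G.Dart, σ.sgn d = xor (f d.toProd.1) (f d.toProd.2)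

/-- `G` embeds in the sphere with `k` crosscaps: some connected supergraph of `G` (on the same
vertex set) has a cellular embedding scheme whose surface is the sphere with `k` crosscaps. -/
def EmbedsWithCrosscaps (G : SimpleGraph V) (k : ℕ) : Prop :=
  ∃ H : SimpleGraph V, G ≤ H ∧ H.Preconnected ∧
    ∃ σ : Scheme H, σ.eulerGenus = (k : ℤ) ∧ (k = 0 ∨ ¬ σ.Orientable)

/-- `G` embeds in the sphere with `g` handles (an orientable surface of genus `g`). -/
def EmbedsWithHandles (G : SimpleGraph V) (g : ℕ) : Prop :=
  ∃ H : SimpleGraph V, G ≤ H ∧ H.Preconnected ∧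
    ∃ σ : Scheme H, σ.eulerGenus = (2 * g : ℤ) ∧ σ.Orientable

/-- The nonorientable genus (crosscap number) of a finite graph: the least `k` such that `G`
embeds in the sphere with `k` crosscaps. -/
noncomputable def crosscap (G : SimpleGraph V) : ℕ :=
  sInf {k : ℕ | EmbedsWithCrosscaps G k}

/-- The (orientable) genus of a finite graph. -/
noncomputable def genus (G : SimpleGraph V) : ℕ :=
  sInf {g : ℕ | EmbedsWithHandles G g}

/-- The nonorientable genus of an arbitrary (possibly infinite) graph: the supremum of the
nonorientable genera of its finite (induced) subgraphs. -/
noncomputable def crosscapE (G : SimpleGraph V) : ℕ∞ :=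
  ⨆ s : Finset V, (crosscap (G.induce (s : Set V)) : ℕ∞)

end CrosscapDef

namespace CrosscapDef
/-- The generalized unit and unitary Cayley graph `Γ(R, G, S)`: vertices are the elements of
`R`, and distinct `x`, `y` are adjacent iff `x + s*y` is a unit belonging to `G` for some
`s ∈ S`. -/
def gammaGraph (R : Type*) [CommRing R] (G : Subgroup Rˣ) (S : Set Rˣ)
    (hSG : S ⊆ (G : Set Rˣ)) (hS : S⁻¹ ⊆ S) : SimpleGraph R where
  Adj x y := x ≠ y ∧ ∃ s ∈ S, ∃ u ∈ G, (u : R) = x + (s : Rˣ) * y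
  symm := ⟨by
    rintro x y ⟨hxy, s, hs, u, hu, h⟩
    refine ⟨hxy.symm, s⁻¹, hS (by simpa using hs), s⁻¹ * u,
      mul_mem (inv_mem (hSG hs)) hu, ?_⟩
    have h1 : ((s⁻¹ : Rˣ) : R) * (s : R) = 1 := Units.inv_mul s
    calc ((s⁻¹ * u : Rˣ) : R) = ((s⁻¹ : Rˣ) : R) * ((u : Rˣ) : R) := Units.val_mul _ _
      _ = ((s⁻¹ : Rˣ) : R) * (x + (s : Rˣ) * y) := by rw [h]
      _ = y + ((s⁻¹ : Rˣ) : R) * x := by rw [mul_add, ← mul_assoc, h1]; ring⟩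
  loopless := ⟨fun x h => h.1 rfl⟩

/-- The graph `Γ(R, S) = Γ(R, U(R), S)`. -/
def unitGammaGraph (R : Type*) [CommRing R] (S : Set Rˣ) (hS : S⁻¹ ⊆ S) : SimpleGraph R :=
  gammaGraph R ⊤ S (fun x _ => by simp) hS

/-- The co-maximal graph of `R`: distinct `x`, `y` are adjacent iff `Rx + Ry = R`. -/
def comaximalGraph (R : Type*) [CommRing R] : SimpleGraph R where
  Adj x y := x ≠ y ∧ Ideal.span {x} ⊔ Ideal.span {y} = ⊤
  symm := ⟨by rintro x y ⟨h1, h2⟩; exact ⟨h1.symm, by rwa [sup_comm]⟩⟩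
  loopless := ⟨fun x h => h.1 rfl⟩

end CrosscapDef

theorem encard_prod_aux {α β : Type*} (s : Set α) (t : Set β) :
    (s ×ˢ t).encard = s.encard * t.encard := by
  rcases s.eq_empty_or_nonempty with rfl | hs
  · simp
  rcases t.eq_empty_or_nonempty with rfl | ht
  · simp
  by_cases hsf : s.Finite
  · by_cases htf : t.Finite
    · rw [hsf.encard_eq_coe_toFinset_card, htf.encard_eq_coe_toFinset_card,
        (hsf.prod htf).encard_eq_coe_toFinset_card, ← Set.Finite.toFinset_prod,
        Finset.card_product]
      push_cast
      rfl
    · have h1 : t.Infinite := htf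
      rw [Set.encard_eq_top (h1.prod_right hs), Set.encard_eq_top h1,
        ENat.mul_top hs.encard_pos.ne']
  · have h1 : s.Infinite := hsf
    rw [Set.encard_eq_top (h1.prod_left ht), Set.encard_eq_top h1,
      ENat.top_mul ht.encard_pos.ne']

open CrosscapDef in
/-- Every vertex `x` of `Γ(R, G, S)` satisfies `|G| − 1 ≤ deg(x) ≤ |G|·|S|`. -/
theorem gammaGraph_degree_bounds {R : Type*} [CommRing R] (G : Subgroup Rˣ) (S : Set Rˣ)
    (hne : S.Nonempty) (hSG : S ⊆ (G : Set Rˣ)) (hS : S⁻¹ ⊆ S) (x : R) :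
    (G : Set Rˣ).encard - 1 ≤ ((gammaGraph R G S hSG hS).neighborSet x).encard ∧
    ((gammaGraph R G S hSG hS).neighborSet x).encard ≤ (G : Set Rˣ).encard * S.encard := by
  classical
  set Γ := gammaGraph R G S hSG hS with hΓ
  constructor
  · -- lower bound
    obtain ⟨s, hs⟩ := hne
    set E : Set Rˣ := {u | (u : R) = x + (s : R) * x} with hE
    have hEcard : E.encard ≤ 1 := by
      rw [Set.encard_le_one_iff]
      intro a b ha hb
      exact Units.ext (ha.trans hb.symm)
    set f : Rˣ → R := fun u => ((s⁻¹ : Rˣ) : R) * ((u : R) - x) with hf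
    have hinvmul : ((s⁻¹ : Rˣ) : R) * (s : R) = 1 := Units.inv_mul s
    have hmulinv : ((s : Rˣ) : R) * ((s⁻¹ : Rˣ) : R) = 1 := Units.mul_inv s
    have hmaps : Set.MapsTo f ((G : Set Rˣ) \ E) (Γ.neighborSet x) := by
      rintro u ⟨huG, huE⟩
      have hval : x + (s : R) * f u = (u : R) := by
        rw [hf]
        dsimp only
        rw [← mul_assoc, hmulinv, one_mul]
        ring
      rw [hΓ]
      refine ⟨?_, s, hs, u, huG, hval.symm⟩
      intro hxy
      apply huE
      rw [hE]
      show (u : R) = x + (s : R) * x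
      rw [← hval, ← hxy]
    have hinj : Set.InjOn f ((G : Set Rˣ) \ E) := by
      intro u _ v _ huv
      have h2 : (s : R) * (((s⁻¹ : Rˣ) : R) * ((u : R) - x)) =
          (s : R) * (((s⁻¹ : Rˣ) : R) * ((v : R) - x)) := by
        rw [show (((s⁻¹ : Rˣ) : R) * ((u : R) - x)) = f u from rfl,
          show (((s⁻¹ : Rˣ) : R) * ((v : R) - x)) = f v from rfl, huv]
      rw [← mul_assoc, hmulinv, one_mul, ← mul_assoc, hmulinv, one_mul] at h2
      exact Units.ext (by linear_combination h2)
    calc (G : Set Rˣ).encard - 1 ≤ (G : Set Rˣ).encard - E.encard :=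
          tsub_le_tsub_left hEcard _
      _ ≤ ((G : Set Rˣ) \ E).encard := Set.tsub_encard_le_encard_diff _ _
      _ ≤ (Γ.neighborSet x).encard := Set.encard_le_encard_of_injOn hmaps hinj
  · -- upper bound
    have hsub : Γ.neighborSet x ⊆
        (fun p : Rˣ × Rˣ => ((p.2⁻¹ : Rˣ) : R) * ((p.1 : R) - x)) ''
          ((G : Set Rˣ) ×ˢ S) := by
      rintro y hy
      rw [hΓ] at hy
      obtain ⟨hxy, s, hs, u, hu, h⟩ := hy
      refine ⟨(u, s), ⟨hu, hs⟩, ?_⟩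
      show ((s⁻¹ : Rˣ) : R) * ((u : R) - x) = y
      have hinvmul : ((s⁻¹ : Rˣ) : R) * (s : R) = 1 := Units.inv_mul s
      rw [h, add_sub_cancel_left, ← mul_assoc, hinvmul, one_mul]
    calc (Γ.neighborSet x).encard
        ≤ ((fun p : Rˣ × Rˣ => ((p.2⁻¹ : Rˣ) : R) * ((p.1 : R) - x)) ''
            ((G : Set Rˣ) ×ˢ S)).encard := Set.encard_le_encard hsub
      _ ≤ ((G : Set Rˣ) ×ˢ S).encard := Set.encard_image_le _ _
      _ = (G : Set Rˣ).encard * S.encard := encard_prod_aux _ _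
end

section
/- Let R be a commutative ring with a maximal ideal m such that |R/m| = 2, and let S ⊆ U(R) be non-empty with S⁻¹ ⊆ S. Then the graph Γ(R, S) := Γ(R, U(R), S) is bipartite. Moreover, if R is local with maximal ideal m, then Γ(R, S) is the complete bipartite graph with parts m and 1 + m. -/
lemma two_elems_aux {α : Type*} (h : Nat.card α = 2) (a b c : α) (hab : a ≠ b) :
    c = a ∨ c = b := by
  classical
  have : Finite α := Nat.finite_of_card_ne_zero (by omega)
  have : Fintype α := Fintype.ofFinite α
  by_contra hc
  push_neg at hc
  have hcard3 : ({a, b, c} : Finset α).card = 3 := by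
    rw [Finset.card_insert_of_notMem (by simp [hab, Ne.symm hc.1]),
      Finset.card_insert_of_notMem (by simp [Ne.symm hc.2]), Finset.card_singleton]
  have := Finset.card_le_univ ({a, b, c} : Finset α)
  rw [hcard3] at this
  rw [Nat.card_eq_fintype_card] at h
  omega

open CrosscapDef in
/-- If `R` has a maximal ideal `m` with `|R/m| = 2`, then `Γ(R, S)` is bipartite; if moreover
`R` is local with maximal ideal `m`, then `Γ(R, S)` is the complete bipartite graph with parts
`m` and `1 + m`. -/
theorem unitGammaGraph_bipartite {R : Type*} [CommRing R] (m : Ideal R) (hm : m.IsMaximal)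
    (hcard : Nat.card (R ⧸ m) = 2) (S : Set Rˣ) (hne : S.Nonempty) (hS : S⁻¹ ⊆ S) :
    (unitGammaGraph R S hS).Colorable 2 ∧
    (IsLocalRing R → ∀ x y : R,
      (unitGammaGraph R S hS).Adj x y ↔
        ((x ∈ m ∧ y - 1 ∈ m) ∨ (y ∈ m ∧ x - 1 ∈ m))) := by
  classical
  have hnt : Nontrivial (R ⧸ m) := Ideal.Quotient.nontrivial_iff.mpr hm.ne_top
  have hzo : (0 : R ⧸ m) ≠ 1 := zero_ne_one
  -- every element of R is in m or ≡ 1 mod m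
  have hdich : ∀ x : R, x ∈ m ∨ x - 1 ∈ m := by
    intro x
    rcases two_elems_aux hcard 0 1 (Ideal.Quotient.mk m x) hzo with h | h
    · left; exact (Ideal.Quotient.eq_zero_iff_mem).1 h
    · right
      have : Ideal.Quotient.mk m (x - 1) = 0 := by
        rw [map_sub, map_one, h, sub_self]
      exact (Ideal.Quotient.eq_zero_iff_mem).1 this
  have hone : (1 : R) ∉ m := by
    intro h1
    exact hm.ne_top ((Ideal.eq_top_iff_one m).2 h1)
  -- units are ≡ 1 mod m
  have hunit : ∀ u : Rˣ, (u : R) - 1 ∈ m := by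
    intro u
    rcases hdich (u : R) with h | h
    · exfalso
      have : ((u⁻¹ : Rˣ) : R) * (u : R) ∈ m := Ideal.mul_mem_left m _ h
      rw [Units.inv_mul] at this
      exact hone this
    · exact h
  -- 2 ∈ m
  have htwo : (2 : R) ∈ m := by
    rcases hdich 2 with h | h
    · exact h
    · exfalso
      have : (1 : R) ∈ m := by
        have := h; rw [show (2 : R) - 1 = 1 by ring] at this; exact this
      exact hone this
  -- key : adjacency implies x + y - 1 ∈ m
  have hkey : ∀ x y : R, (unitGammaGraph R S hS).Adj x y → x + y - 1 ∈ m := by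
    rintro x y ⟨-, s, hsS, u, -, hu⟩
    have h1 : x + (s : Rˣ) * y - 1 ∈ m := by rw [← hu]; exact hunit u
    have h2 : ((s : Rˣ) : R) * y - y ∈ m := by
      have h3 : y * (((s : Rˣ) : R) - 1) ∈ m := Ideal.mul_mem_left m _ (hunit s)
      rwa [mul_sub, mul_one, mul_comm] at h3
    have := m.sub_mem h1 h2
    have heq : x + (s : Rˣ) * y - 1 - ((s : Rˣ) * y - y) = x + y - 1 := by ring
    rwa [heq] at this
  constructor
  · -- bipartite: color by membership in m
    refine ⟨⟨fun x => if x ∈ m then 0 else 1, ?_⟩⟩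
    intro x y hadj
    have hxy1 : x + y - 1 ∈ m := hkey x y hadj
    by_cases hx : x ∈ m <;> by_cases hy : y ∈ m <;> simp only [hx, hy, if_true, if_false]
    · exfalso
      have : (1 : R) ∈ m := by
        have := m.sub_mem (m.add_mem hx hy) hxy1
        rwa [show x + y - (x + y - 1) = 1 by ring] at this
      exact hone this
    · exact fun h => absurd h (by decide)
    · exact fun h => absurd h (by decide)
    · exfalso
      rcases hdich x with h | hx1; · exact hx h
      rcases hdich y with h | hy1; · exact hy h
      have h3 := m.sub_mem (m.sub_mem hxy1 hx1) hy1
      rw [show x + y - 1 - (x - 1) - (y - 1) = 1 by ring] at h3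
      exact hone h3
  · intro hloc x y
    have hm' : m = IsLocalRing.maximalIdeal R := IsLocalRing.eq_maximalIdeal hm
    have hunit_of : ∀ z : R, z ∉ m → IsUnit z := by
      intro z hz
      by_contra hnz
      exact hz (hm' ▸ (IsLocalRing.mem_maximalIdeal z).2 hnz)
    constructor
    · rintro hadj
      have hxy1 : x + y - 1 ∈ m := hkey x y hadj
      rcases hdich x with hx | hx1
      · left
        refine ⟨hx, ?_⟩
        have h4 := m.sub_mem hxy1 hx
        rwa [show x + y - 1 - x = y - 1 by ring] at h4
      · right
        have hy : y ∈ m := by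
          have h4 := m.sub_mem hxy1 hx1
          rwa [show x + y - 1 - (x - 1) = y by ring] at h4
        exact ⟨hy, hx1⟩
    · rintro (⟨hx, hy1⟩ | ⟨hy, hx1⟩)
      · obtain ⟨s, hsS⟩ := hne
        have hmem : x + (s : Rˣ) * y - 1 ∈ m := by
          have h1 : ((s : Rˣ) : R) * (y - 1) ∈ m := Ideal.mul_mem_left m _ hy1
          have h2 := m.add_mem (m.add_mem hx h1) (hunit s)
          rwa [show x + (s : Rˣ) * (y - 1) + ((s : Rˣ) - 1) = x + (s : Rˣ) * y - 1
            by ring] at h2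
        have hnot : x + (s : Rˣ) * y ∉ m := by
          intro h
          have h2 := m.sub_mem h hmem
          rw [show x + (s : Rˣ) * y - (x + (s : Rˣ) * y - 1) = 1 by ring] at h2
          exact hone h2
        obtain ⟨u, hu⟩ := hunit_of _ hnot
        refine ⟨?_, s, hsS, u, trivial, hu⟩
        rintro rfl
        have h2 := m.sub_mem hx hy1
        rw [show x - (x - 1) = 1 by ring] at h2
        exact hone h2
      · obtain ⟨s, hsS⟩ := hne
        have hmem : x + (s : Rˣ) * y - 1 ∈ m := by
          have h1 : ((s : Rˣ) : R) * y ∈ m := Ideal.mul_mem_left m _ hy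
          have h2 := m.add_mem hx1 h1
          rwa [show x - 1 + (s : Rˣ) * y = x + (s : Rˣ) * y - 1 by ring] at h2
        have hnot : x + (s : Rˣ) * y ∉ m := by
          intro h
          have h2 := m.sub_mem h hmem
          rw [show x + (s : Rˣ) * y - (x + (s : Rˣ) * y - 1) = 1 by ring] at h2
          exact hone h2
        obtain ⟨u, hu⟩ := hunit_of _ hnot
        refine ⟨?_, s, hsS, u, trivial, hu⟩
        rintro rfl
        have h2 := m.sub_mem hy hx1
        rw [show x - (x - 1) = 1 by ring] at h2
        exact hone h2
end

section
/- Let R be a commutative ring, S ⊆ U(R) with S⁻¹ ⊆ S, and suppose x, y ∈ R are adjacent in Γ(R, S) := Γ(R, U(R), S). Then for all j, j' in the Jacobson radical J(R), the elements x + j and y + j' are adjacent in Γ(R, S) (provided x + j ≠ y + j'). -/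
open CrosscapDef in
/-- If `x` and `y` are adjacent in `Γ(R, S)`, then for all `j, j'` in the Jacobson radical,
`x + j` and `y + j'` are adjacent (provided they are distinct). -/
theorem unitGammaGraph_adj_add_jacobson {R : Type*} [CommRing R] (S : Set Rˣ)
    (hS : S⁻¹ ⊆ S) (x y j j' : R) (hj : j ∈ (⊥ : Ideal R).jacobson)
    (hj' : j' ∈ (⊥ : Ideal R).jacobson)
    (hadj : (unitGammaGraph R S hS).Adj x y) (hne : x + j ≠ y + j') :
    (unitGammaGraph R S hS).Adj (x + j) (y + j') := by
  obtain ⟨hxy, s, hs, u, -, h⟩ := hadj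
  set k : R := j + (s : R) * j' with hk
  have hkjac : k ∈ (⊥ : Ideal R).jacobson :=
    Ideal.add_mem _ hj (Ideal.mul_mem_left _ _ hj')
  have hunit : IsUnit ((u : R) + k) := by
    have h1 : IsUnit (k * ((u⁻¹ : Rˣ) : R) + 1) := Ideal.mem_jacobson_bot.mp hkjac _
    have : (u : R) + k = (u : R) * (k * ((u⁻¹ : Rˣ) : R) + 1) := by
      rw [mul_add, mul_one, ← mul_assoc, mul_comm (u : R) k, mul_assoc,
        Units.mul_inv, mul_one, add_comm]
    rw [this]
    exact (Units.isUnit u).mul h1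
  refine ⟨hne, s, hs, hunit.unit, trivial, ?_⟩
  rw [IsUnit.unit_spec, h]
  ring
end

section
/- Let R be an Artinian commutative ring and S ⊆ U(R) non-empty with S⁻¹ ⊆ S. If the nonorientable genus of Γ(R, S) := Γ(R, U(R), S) is finite, then R is a finite ring. -/
section Aux
open SimpleGraph CrosscapDef
variable {V : Type*}

namespace CrosscapDef

lemma Scheme.rot_symm_fst {G : SimpleGraph V} (σ : Scheme G) (d : G.Dart) :
    (σ.rot.symm d).toProd.1 = d.toProd.1 := by
  conv_rhs => rw [← σ.rot.apply_symm_apply d]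
  exact (σ.rot_fst _).symm

lemma Scheme.rot_ne {G : SimpleGraph V} (σ : Scheme G) {d d' : G.Dart} (hne : d' ≠ d)
    (h : d'.toProd.1 = d.toProd.1) : σ.rot d ≠ d := by
  intro hfix
  obtain ⟨i, hi⟩ := σ.rot_single d d' h.symm
  rw [Equiv.Perm.zpow_apply_eq_self_of_apply_eq_self hfix] at hi
  exact hne hi.symm

lemma Scheme.rot_symm_ne {G : SimpleGraph V} (σ : Scheme G) {d d' : G.Dart} (hne : d' ≠ d)
    (h : d'.toProd.1 = d.toProd.1) : σ.rot.symm d ≠ d := by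
  intro hfix
  have : σ.rot d = d := by conv_lhs => rw [← hfix, σ.rot.apply_symm_apply]
  exact σ.rot_ne hne h this

lemma Scheme.facePerm_apply {G : SimpleGraph V} (σ : Scheme G) (d : G.Dart) (s : Bool) :
    σ.facePerm (d, s) = (cond (xor s (σ.sgn d)) (σ.rot d.symm) (σ.rot.symm d.symm),
      xor s (σ.sgn d)) := rfl

lemma Scheme.facePerm_fst_fst {G : SimpleGraph V} (σ : Scheme G) (p : G.Dart × Bool) :
    (σ.facePerm p).1.toProd.1 = p.1.toProd.2 := by
  obtain ⟨d, s⟩ := p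
  rw [σ.facePerm_apply]
  cases xor s (σ.sgn d) <;> simp [σ.rot_fst, σ.rot_symm_fst]

lemma Scheme.facePerm_ne {G : SimpleGraph V} (σ : Scheme G) (p : G.Dart × Bool) :
    σ.facePerm p ≠ p := by
  intro h
  have h2 := σ.facePerm_fst_fst p
  rw [h] at h2
  exact p.1.adj.ne h2

lemma Scheme.facePerm_facePerm_ne {G : SimpleGraph V} (σ : Scheme G)
    (hdeg : ∀ d : G.Dart, ∃ d' : G.Dart, d' ≠ d ∧ d'.toProd.1 = d.toProd.1)
    (p : G.Dart × Bool) : σ.facePerm (σ.facePerm p) ≠ p := by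
  obtain ⟨d, s⟩ := p
  intro h
  -- the middle dart e
  set q := σ.facePerm (d, s) with hq
  have hqd : q.1.toProd.1 = d.toProd.2 := σ.facePerm_fst_fst (d, s)
  have hq2 : (σ.facePerm q).1.toProd.1 = q.1.toProd.2 := σ.facePerm_fst_fst q
  rw [h] at hq2
  -- q.1 = d.symm
  have hqsymm : q.1 = d.symm := by
    apply SimpleGraph.Dart.ext
    exact Prod.ext hqd hq2.symm
  -- but q.1 = rot^{±1} d.symm which is never d.symm
  obtain ⟨d', hd'ne, hd'fst⟩ := hdeg d.symm
  rw [σ.facePerm_apply] at hq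
  cases hxor : xor s (σ.sgn d)
  · rw [hxor] at hq
    exact σ.rot_symm_ne hd'ne hd'fst (by rw [hq] at hqsymm; simpa using hqsymm)
  · rw [hxor] at hq
    exact σ.rot_ne hd'ne hd'fst (by rw [hq] at hqsymm; simpa using hqsymm)

end CrosscapDef
end Aux
section Aux2
open SimpleGraph CrosscapDef
namespace CrosscapDef

lemma sameCycle_iterate {α : Type*} (f : Equiv.Perm α) (x : α) (k : ℕ) :
    f.SameCycle x (f^[k] x) :=
  ⟨(k : ℤ), by rw [zpow_natCast, Equiv.Perm.coe_pow]⟩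

lemma three_mul_cycleCount_le {α : Type*} [Finite α] (f : Equiv.Perm α)
    (h1 : ∀ p, f p ≠ p) (h2 : ∀ p, f (f p) ≠ p) :
    3 * cycleCount f ≤ Nat.card α := by
  classical
  set sd : Setoid α := Setoid.mk f.SameCycle
    ⟨fun _ => Equiv.Perm.SameCycle.rfl, Equiv.Perm.SameCycle.symm,
      Equiv.Perm.SameCycle.trans⟩ with hsd
  have hcc : cycleCount f = Nat.card (Quotient sd) := rfl
  rw [hcc]
  have hqf : Finite (Quotient sd) := Quotient.finite sd
  have key : ∀ (x : α) (a b : ℕ), a < b → b < 3 → f^[a] x ≠ f^[b] x := by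
    intro x a b hab hb3 heq
    have hx : f^[a] (f^[b - a] x) = f^[a] x := by
      rw [← Function.iterate_add_apply]
      rw [show a + (b - a) = b by omega]
      exact heq.symm
    have hx2 : f^[b - a] x = x := f.injective.iterate a hx
    have : b - a = 1 ∨ b - a = 2 := by omega
    rcases this with hd | hd <;> rw [hd] at hx2
    · exact h1 x (by simpa using hx2)
    · exact h2 x (by simpa [Function.iterate_succ_apply] using hx2)
  set F : Quotient sd × Fin 3 → α := fun p => f^[p.2.val] p.1.out with hF
  have hinj : Function.Injective F := by
    rintro ⟨q, i⟩ ⟨q', j⟩ hij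
    simp only [hF] at hij
    have hsc : f.SameCycle q.out q'.out :=
      (sameCycle_iterate f q.out i.val).trans
        (hij ▸ (sameCycle_iterate f q'.out j.val).symm)
    have hqq : q = q' := by
      rw [← Quotient.out_eq q, ← Quotient.out_eq q']
      exact Quotient.sound hsc
    subst hqq
    have hij' : i.val = j.val := by
      rcases Nat.lt_trichotomy i.val j.val with hlt | heq | hgt
      · exact absurd hij (key q.out i.val j.val hlt j.isLt)
      · exact heq
      · exact absurd hij.symm (key q.out j.val i.val hgt i.isLt)
    exact Prod.ext rfl (Fin.ext hij')
  calc 3 * Nat.card (Quotient sd) = Nat.card (Quotient sd × Fin 3) := by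
        simp [Nat.card_prod, mul_comm]
      _ ≤ Nat.card α := Nat.card_le_card_of_injective F hinj

end CrosscapDef
end Aux2
section Aux3
open SimpleGraph CrosscapDef
variable {V : Type*}
namespace CrosscapDef

lemma Scheme.eulerGenus_bound [Finite V] {H : SimpleGraph V} (σ : Scheme H)
    (hdeg : ∀ d : H.Dart, ∃ d' : H.Dart, d' ≠ d ∧ d'.toProd.1 = d.toProd.1) :
    9 + (Nat.card H.Dart : ℤ) ≤ 6 * σ.eulerGenus + 6 * (Nat.card V : ℤ) := by
  have hDf : Finite H.Dart := Finite.of_injective _ Dart.toProd_injective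
  set D := Nat.card H.Dart with hD
  set C := cycleCount σ.facePerm with hC
  have h3C : 3 * C ≤ 2 * D := by
    have := three_mul_cycleCount_le σ.facePerm σ.facePerm_ne
      (σ.facePerm_facePerm_ne hdeg)
    simpa [Nat.card_prod, mul_comm, hD] using this
  have hF : 2 * σ.faceCount ≤ C := by
    have : σ.faceCount = C / 2 := rfl
    omega
  have hE : 2 * (D / 2) + 1 ≥ D := by omega
  have hgen : σ.eulerGenus = 2 - (Nat.card V : ℤ) + ((D / 2 : ℕ) : ℤ) - (σ.faceCount : ℤ) :=
    rfl
  rw [hgen]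
  have h1 : ((D / 2 : ℕ) : ℤ) * 2 + 1 ≥ (D : ℤ) := by
    have : D ≤ (D / 2) * 2 + 1 := by omega
    exact_mod_cast this
  have h2 : 6 * (σ.faceCount : ℤ) ≤ 2 * (D : ℤ) := by
    have : 6 * σ.faceCount ≤ 2 * D := by omega
    exact_mod_cast this
  linarith

lemma le_of_embedsWithCrosscaps [Finite V] {G : SimpleGraph V} {k : ℕ}
    (hdeg : ∀ v : V, ∃ w w' : V, w ≠ w' ∧ G.Adj v w ∧ G.Adj v w')
    (h : EmbedsWithCrosscaps G k) :
    9 + Nat.card G.Dart ≤ 6 * k + 6 * Nat.card V := by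
  obtain ⟨H, hGH, _, σ, hgen, _⟩ := h
  have hHdeg : ∀ d : H.Dart, ∃ d' : H.Dart, d' ≠ d ∧ d'.toProd.1 = d.toProd.1 := by
    intro d
    obtain ⟨w, w', hww, hw, hw'⟩ := hdeg d.toProd.1
    by_cases hcase : d.toProd.2 = w
    · exact ⟨⟨(d.toProd.1, w'), hGH hw'⟩, by
        intro hcon
        apply hww
        rw [← hcase]
        exact (congrArg (fun d => d.toProd.2) hcon).symm, rfl⟩
    · exact ⟨⟨(d.toProd.1, w), hGH hw⟩, by
        intro hcon
        apply hcase
        exact (congrArg (fun d => d.toProd.2) hcon).symm, rfl⟩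
  have hbound := σ.eulerGenus_bound hHdeg
  rw [hgen] at hbound
  have hDle : Nat.card G.Dart ≤ Nat.card H.Dart := by
    have hDf : Finite H.Dart := Finite.of_injective _ Dart.toProd_injective
    exact Nat.card_le_card_of_injective
      (fun d => (⟨d.toProd, hGH d.adj⟩ : H.Dart))
      (fun d d' hdd => Dart.toProd_injective (by
        have := congrArg Dart.toProd hdd
        exact this))
  omega

end CrosscapDef
end Aux3
section Aux4
open SimpleGraph CrosscapDef
namespace CrosscapDef

variable {m : ℕ}

/-- The "skip zero" successor map on `ZMod m`, a cyclic permutation of nonzero elements. -/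
def zskip (m : ℕ) : ZMod m → ZMod m := fun u => if u + 1 = 0 then 1 else u + 1

/-- The "skip zero" predecessor map on `ZMod m`. -/
def zskip' (m : ℕ) : ZMod m → ZMod m := fun u => if u - 1 = 0 then -1 else u - 1

lemma zmod_nontrivial (hm : 2 ≤ m) : Nontrivial (ZMod m) := by
  haveI : Fact (1 < m) := ⟨hm⟩
  infer_instance

lemma zskip_ne_zero (hm : 2 ≤ m) {u : ZMod m} (hu : u ≠ 0) : zskip m u ≠ 0 := by
  haveI := zmod_nontrivial hm
  unfold zskip
  split_ifs with h
  · exact one_ne_zero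
  · exact h

lemma zskip'_ne_zero (hm : 2 ≤ m) {u : ZMod m} (hu : u ≠ 0) : zskip' m u ≠ 0 := by
  haveI := zmod_nontrivial hm
  unfold zskip'
  split_ifs with h
  · simpa using (one_ne_zero : (1 : ZMod m) ≠ 0)
  · exact h

lemma zskip'_zskip (hm : 2 ≤ m) {u : ZMod m} (hu : u ≠ 0) : zskip' m (zskip m u) = u := by
  unfold zskip zskip'
  split_ifs with h h2 h3
  · exact (eq_neg_of_add_eq_zero_left h).symm
  · simp at h2
  · exact absurd (by simpa using h3) hu
  · simp

lemma zskip_zskip' (hm : 2 ≤ m) {u : ZMod m} (hu : u ≠ 0) : zskip m (zskip' m u) = u := by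
  unfold zskip zskip'
  split_ifs with h h2 h3
  · rw [sub_eq_zero] at h
    simp [h.symm]
  · simp at h2
  · exact absurd (by simpa [sub_add_cancel] using h3) hu
  · simp

lemma zskip_iter_one (hm : 2 ≤ m) : ∀ k, k < m - 1 →
    (zskip m)^[k] (1 : ZMod m) = ((k + 1 : ℕ) : ZMod m) := by
  intro k
  induction k with
  | zero => intro _; simp
  | succ k ih =>
    intro hk
    rw [Function.iterate_succ_apply', ih (by omega)]
    unfold zskip
    have hne : ((k + 1 : ℕ) : ZMod m) + 1 ≠ 0 := by
      haveI : NeZero m := ⟨by omega⟩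
      rw [show ((k + 1 : ℕ) : ZMod m) + 1 = ((k + 2 : ℕ) : ZMod m) by push_cast; ring]
      rw [Ne, ZMod.natCast_eq_zero_iff]
      intro hdvd
      have := Nat.le_of_dvd (by omega) hdvd
      omega
    rw [if_neg hne]
    push_cast
    ring

lemma zskip_iter_period (hm : 2 ≤ m) : (zskip m)^[m - 1] (1 : ZMod m) = 1 := by
  have h1 : m - 1 = (m - 2) + 1 := by omega
  rw [h1, Function.iterate_succ_apply', zskip_iter_one hm (m - 2) (by omega)]
  unfold zskip
  rw [if_pos]
  rw [show ((m - 2 + 1 : ℕ) : ZMod m) + 1 = ((m : ℕ) : ZMod m) by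
    rw [← Nat.cast_add_one, show m - 2 + 1 + 1 = m by omega]]
  exact ZMod.natCast_self m

lemma zskip_exists_iter (hm : 2 ≤ m) {u : ZMod m} (hu : u ≠ 0) :
    ∃ a, a < m - 1 ∧ (zskip m)^[a] (1 : ZMod m) = u := by
  haveI : NeZero m := ⟨by omega⟩
  refine ⟨u.val - 1, ?_, ?_⟩
  · have := u.val_lt
    omega
  · have hv : u.val ≠ 0 := by
      intro h0
      exact hu ((ZMod.val_eq_zero u).mp h0)
    rw [zskip_iter_one hm _ (by have := u.val_lt; omega)]
    rw [show u.val - 1 + 1 = u.val by omega]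
    exact ZMod.natCast_rightInverse u

lemma zskip_sameCycle (hm : 2 ≤ m) {u u' : ZMod m} (hu : u ≠ 0) (hu' : u' ≠ 0) :
    ∃ k : ℕ, (zskip m)^[k] u = u' := by
  obtain ⟨a, ha, hau⟩ := zskip_exists_iter hm hu
  obtain ⟨b, hb, hbu⟩ := zskip_exists_iter hm hu'
  rcases le_or_gt a b with hab | hab
  · refine ⟨b - a, ?_⟩
    rw [← hau, ← Function.iterate_add_apply, show b - a + a = b by omega, hbu]
  · refine ⟨(m - 1) - a + b, ?_⟩
    rw [← hau, ← Function.iterate_add_apply,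
      show (m - 1) - a + b + a = b + (m - 1) by omega,
      Function.iterate_add_apply, zskip_iter_period hm, hbu]

end CrosscapDef
end Aux4
section Aux5
open SimpleGraph CrosscapDef
namespace CrosscapDef

lemma exists_scheme_top {V : Type*} [Fintype V] (hm : 2 ≤ Fintype.card V) :
    ∃ σ : Scheme (⊤ : SimpleGraph V), ∀ d, σ.sgn d = true := by
  classical
  set m := Fintype.card V with hmdef
  haveI : NeZero m := ⟨by omega⟩
  obtain ⟨e⟩ : Nonempty (V ≃ ZMod m) := ⟨Fintype.equivOfCardEq (by rw [ZMod.card])⟩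
  have hsub : ∀ d : (⊤ : SimpleGraph V).Dart, e d.toProd.2 - e d.toProd.1 ≠ 0 := fun d =>
    sub_ne_zero.mpr (fun h => d.adj.ne' (e.injective h))
  have hadj : ∀ (d : (⊤ : SimpleGraph V).Dart) (z : ZMod m), z ≠ 0 →
      (⊤ : SimpleGraph V).Adj d.toProd.1 (e.symm (e d.toProd.1 + z)) := by
    intro d z hz
    rw [top_adj]
    intro hcon
    apply hz
    have := congrArg e hcon
    rw [Equiv.apply_symm_apply] at this
    exact (left_eq_add.mp this)
  set nxt : (⊤ : SimpleGraph V).Dart → (⊤ : SimpleGraph V).Dart := fun d =>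
    ⟨(d.toProd.1, e.symm (e d.toProd.1 + zskip m (e d.toProd.2 - e d.toProd.1))),
      hadj d _ (zskip_ne_zero hm (hsub d))⟩ with hnxt
  set prv : (⊤ : SimpleGraph V).Dart → (⊤ : SimpleGraph V).Dart := fun d =>
    ⟨(d.toProd.1, e.symm (e d.toProd.1 + zskip' m (e d.toProd.2 - e d.toProd.1))),
      hadj d _ (zskip'_ne_zero hm (hsub d))⟩ with hprv
  have hnxt_toProd : ∀ d : (⊤ : SimpleGraph V).Dart, (nxt d).toProd =
      (d.toProd.1, e.symm (e d.toProd.1 + zskip m (e d.toProd.2 - e d.toProd.1))) :=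
    fun d => rfl
  have hprv_toProd : ∀ d : (⊤ : SimpleGraph V).Dart, (prv d).toProd =
      (d.toProd.1, e.symm (e d.toProd.1 + zskip' m (e d.toProd.2 - e d.toProd.1))) :=
    fun d => rfl
  have hpn : ∀ d, prv (nxt d) = d := by
    intro d
    apply Dart.ext
    rw [hprv_toProd, hnxt_toProd]
    dsimp only
    rw [Equiv.apply_symm_apply, add_sub_cancel_left, zskip'_zskip hm (hsub d),
      show e d.toProd.1 + (e d.toProd.2 - e d.toProd.1) = e d.toProd.2 by ring,
      Equiv.symm_apply_apply]
  have hnp : ∀ d, nxt (prv d) = d := by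
    intro d
    apply Dart.ext
    rw [hnxt_toProd, hprv_toProd]
    dsimp only
    rw [Equiv.apply_symm_apply, add_sub_cancel_left, zskip_zskip' hm (hsub d),
      show e d.toProd.1 + (e d.toProd.2 - e d.toProd.1) = e d.toProd.2 by ring,
      Equiv.symm_apply_apply]
  set rot : Equiv.Perm (⊤ : SimpleGraph V).Dart := ⟨nxt, prv, hpn, hnp⟩ with hrot
  have hiter : ∀ (k : ℕ) (d : (⊤ : SimpleGraph V).Dart), (nxt^[k] d).toProd =
      (d.toProd.1, e.symm (e d.toProd.1 + (zskip m)^[k] (e d.toProd.2 - e d.toProd.1))) := by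
    intro k
    induction k with
    | zero =>
      intro d
      simp only [Function.iterate_zero, id_eq]
      rw [show e d.toProd.1 + (e d.toProd.2 - e d.toProd.1) = e d.toProd.2 by ring,
        Equiv.symm_apply_apply]
    | succ k ih =>
      intro d
      rw [Function.iterate_succ_apply', hnxt_toProd]
      have h1 := congrArg Prod.fst (ih d)
      have h2 := congrArg Prod.snd (ih d)
      dsimp only at h1 h2
      rw [h1, h2, Equiv.apply_symm_apply, add_sub_cancel_left,
        Function.iterate_succ_apply']
  refine ⟨⟨rot, fun d => rfl, ?_, fun _ => true, fun _ => rfl⟩, fun _ => rfl⟩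
  intro d d' hdd
  obtain ⟨k, hk⟩ := zskip_sameCycle hm (hsub d) (hsub d')
  refine ⟨(k : ℤ), ?_⟩
  rw [zpow_natCast]
  apply Dart.ext
  have hco : ((rot ^ k : Equiv.Perm _) d) = nxt^[k] d := by
    rw [Equiv.Perm.coe_pow]
    rfl
  rw [hco, hiter k d, hk, hdd]
  rw [show e d'.toProd.1 + (e d'.toProd.2 - e d'.toProd.1) = e d'.toProd.2 by ring,
    Equiv.symm_apply_apply]

end CrosscapDef
end Aux5
section Aux6
open SimpleGraph CrosscapDef
namespace CrosscapDef

lemma exists_third {V : Type*} [Fintype V] (hm : 3 ≤ Fintype.card V) (a b : V) :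
    ∃ c : V, c ≠ a ∧ c ≠ b := by
  classical
  by_contra hcon
  push_neg at hcon
  have hsub : (Finset.univ : Finset V) ⊆ {a, b} := by
    intro x _
    rcases eq_or_ne x a with h | h
    · simp [h]
    · simp [hcon x h]
  have := Finset.card_le_card hsub
  have h2 : ({a, b} : Finset V).card ≤ 2 := Finset.card_insert_le _ _ |>.trans (by simp)
  rw [Finset.card_univ] at this
  omega

lemma exists_embedsWithCrosscaps {V : Type*} [Fintype V] (G : SimpleGraph V)
    (hm : 3 ≤ Fintype.card V)
    (hD : 6 * Fintype.card V ≤ 9 + Nat.card (⊤ : SimpleGraph V).Dart) :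
    ∃ k : ℕ, EmbedsWithCrosscaps G k := by
  classical
  obtain ⟨σ, hsgn⟩ := exists_scheme_top (V := V) (by omega)
  have hdeg : ∀ d : (⊤ : SimpleGraph V).Dart,
      ∃ d' : (⊤ : SimpleGraph V).Dart, d' ≠ d ∧ d'.toProd.1 = d.toProd.1 := by
    intro d
    obtain ⟨c, hc1, hc2⟩ := exists_third hm d.toProd.1 d.toProd.2
    refine ⟨⟨(d.toProd.1, c), (top_adj _ _).mpr (Ne.symm hc1)⟩, ?_, rfl⟩
    intro hcon
    exact hc2 (congrArg (fun x => x.toProd.2) hcon)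
  have hbound := σ.eulerGenus_bound hdeg
  have hcard : (Nat.card V : ℤ) = (Fintype.card V : ℤ) := by
    rw [Nat.card_eq_fintype_card]
  have hgen0 : 0 ≤ σ.eulerGenus := by
    have hD' : (6 * Fintype.card V : ℤ) ≤ 9 + (Nat.card (⊤ : SimpleGraph V).Dart : ℤ) := by
      exact_mod_cast hD
    rw [hcard] at hbound
    linarith
  refine ⟨σ.eulerGenus.toNat, ⊤, le_top, ?_, σ, by rw [Int.toNat_of_nonneg hgen0], Or.inr ?_⟩
  · intro u v
    rcases eq_or_ne u v with h | h
    · subst h; exact Reachable.refl u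
    · exact ((top_adj _ _).mpr h).reachable
  · rintro ⟨f, hf⟩
    obtain ⟨a, b, hab⟩ := Fintype.exists_pair_of_one_lt_card (α := V) (by omega)
    obtain ⟨c, hca, hcb⟩ := exists_third hm a b
    have h1 := hf ⟨(a, b), (top_adj _ _).mpr hab⟩
    have h2 := hf ⟨(b, c), (top_adj _ _).mpr (Ne.symm hcb)⟩
    have h3 := hf ⟨(a, c), (top_adj _ _).mpr (Ne.symm hca)⟩
    rw [hsgn] at h1 h2 h3
    dsimp at h1 h2 h3
    cases hfa : f a <;> cases hfb : f b <;> cases hfc : f c <;>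
      rw [hfa, hfb] at h1 <;> rw [hfb, hfc] at h2 <;> rw [hfa, hfc] at h3 <;> simp at h1 h2 h3

end CrosscapDef
end Aux6
section Aux7
open CrosscapDef

variable {R : Type*} [CommRing R]

lemma isUnit_one_add_of_mem_jacobson {j : R} (hj : j ∈ Ideal.jacobson (⊥ : Ideal R)) :
    IsUnit (1 + j) := by
  obtain ⟨z, hz⟩ := Ideal.mem_jacobson_iff.mp hj 1
  rw [Ideal.mem_bot] at hz
  have hz1 : (1 + j) * z = 1 := by linear_combination hz
  exact IsUnit.of_mul_eq_one z hz1

lemma pi_mk_surjective [IsArtinianRing R] :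
    Function.Surjective
      (fun (x : R) (I : {I : Ideal R | I.IsMaximal}) => Ideal.Quotient.mk I.1 x) := by
  haveI : Finite {I : Ideal R | I.IsMaximal} := (IsArtinianRing.setOfPred_isMaximal_finite R).to_subtype
  have hpair : Pairwise (Function.onFun IsCoprime fun (I : {I : Ideal R | I.IsMaximal}) => I.1) := by
    intro I J hIJ
    exact Ideal.isCoprime_iff_sup_eq.mpr (I.2.coprime_of_ne J.2 (by rwa [Ne, Subtype.coe_inj]))
  intro v
  obtain ⟨y, hy⟩ := Ideal.quotientInfToPiQuotient_surj hpair v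
  obtain ⟨x, rfl⟩ := Ideal.Quotient.mk_surjective y
  refine ⟨x, ?_⟩
  funext I
  rw [← hy]
  exact (Ideal.quotientInfToPiQuotient_mk' _ x I).symm

lemma exists_biclique [IsArtinianRing R] [Infinite R] (s : Rˣ) (n : ℕ) :
    ∃ A B : Finset R, A.card = n ∧ B.card = n ∧ Disjoint A B ∧
      ∀ a ∈ A, ∀ b ∈ B, IsUnit (a + (s : R) * b) := by
  classical
  haveI : Finite {I : Ideal R | I.IsMaximal} := (IsArtinianRing.setOfPred_isMaximal_finite R).to_subtype
  set ι := {I : Ideal R | I.IsMaximal} with hι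
  set J := Ideal.jacobson (⊥ : Ideal R) with hJ
  have hJmem : ∀ x : R, (∀ I : ι, x ∈ I.1) → x ∈ J := by
    intro x hx
    rw [hJ, Ideal.jacobson]
    rw [Ideal.mem_sInf]
    intro I hI
    exact hx ⟨I, hI.2⟩
  by_cases hres : ∀ I : ι, Finite (R ⧸ I.1)
  · -- all residue fields finite: the Jacobson radical is infinite
    have hJinf : Set.Infinite (J : Set R) := by
      by_contra hfin
      rw [Set.not_infinite] at hfin
      haveI := hfin.to_subtype
      set q : R → ∀ I : ι, R ⧸ I.1 := fun x I => Ideal.Quotient.mk I.1 x with hq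
      set c : (∀ I : ι, R ⧸ I.1) → R := fun v => if h : ∃ y, q y = v then h.choose else 0
        with hc
      have hcq : ∀ x : R, q (c (q x)) = q x := by
        intro x
        have hex : ∃ y, q y = q x := ⟨x, rfl⟩
        rw [hc]
        dsimp only
        rw [dif_pos hex]
        exact hex.choose_spec
      set ψ : R → (∀ I : ι, R ⧸ I.1) × (J : Set R) := fun x =>
        (q x, ⟨x - c (q x), by
          apply hJmem
          intro I
          rw [← Ideal.Quotient.eq_zero_iff_mem, map_sub, sub_eq_zero]
          exact (congrFun (hcq x) I).symm⟩) with hψ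
      have hinj : Function.Injective ψ := by
        intro x y hxy
        have h1 : q x = q y := congrArg Prod.fst hxy
        have h2 : x - c (q x) = y - c (q y) := congrArg (fun p => (p.2 : R)) hxy
        rw [h1] at h2
        exact sub_left_inj.mp h2
      haveI : Finite ((∀ I : ι, R ⧸ I.1) × (J : Set R)) := by infer_instance
      haveI := Finite.of_injective ψ hinj
      exact not_finite R
    obtain ⟨T, hT, hTcard⟩ := hJinf.exists_subset_card_eq n
    obtain ⟨B, hB, hBcard⟩ := hJinf.exists_subset_card_eq n
    refine ⟨T.image (fun t => 1 + t), B, ?_, hBcard, ?_, ?_⟩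
    · rw [Finset.card_image_of_injective _ (add_right_injective 1), hTcard]
    · rw [Finset.disjoint_left]
      rintro a ha hab
      obtain ⟨t, ht, rfl⟩ := Finset.mem_image.mp ha
      have h1J : (1 : R) ∈ J := by
        have : (1 : R) = (1 + t) - t := by ring
        rw [this]
        exact Ideal.sub_mem _ (hB hab) (hT ht)
      have : J = ⊤ := Ideal.eq_top_of_isUnit_mem _ h1J isUnit_one
      rw [hJ, Ideal.jacobson_eq_top_iff] at this
      have h10 : (1 : R) ∈ (⊥ : Ideal R) := this ▸ Submodule.mem_top
      rw [Ideal.mem_bot] at h10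
      exact one_ne_zero h10
    · rintro a ha b hb
      obtain ⟨t, ht, rfl⟩ := Finset.mem_image.mp ha
      have hjmem : t + (s : R) * b ∈ J :=
        Ideal.add_mem _ (hT ht) (Ideal.mul_mem_left _ _ (hB hb))
      have : 1 + t + (s : R) * b = 1 + (t + (s : R) * b) := by ring
      rw [this]
      exact isUnit_one_add_of_mem_jacobson hjmem
  · -- some residue field infinite
    push_neg at hres
    obtain ⟨I₀, hI₀⟩ := hres
    haveI : Infinite (R ⧸ I₀.1) := hI₀
    set K := R ⧸ I₀.1 with hK
    set sb : K := Ideal.Quotient.mk I₀.1 (s : R) with hsb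
    obtain ⟨B', hB'card⟩ := Infinite.exists_subset_card_eq K n
    set F : Finset K := B' ∪ B'.image (fun w => -(sb * w)) with hF
    have hcompl : Set.Infinite ((↑F : Set K)ᶜ) := F.finite_toSet.infinite_compl
    obtain ⟨A', hA'sub, hA'card⟩ := hcompl.exists_subset_card_eq n
    -- lifts
    obtain ⟨liftA, hliftA⟩ := Classical.axiomOfChoice (fun u : K =>
      pi_mk_surjective (Function.update (fun I : ι => (1 : R ⧸ I.1)) I₀ u))
    obtain ⟨liftB, hliftB⟩ := Classical.axiomOfChoice (fun u : K =>
      pi_mk_surjective (Function.update (fun I : ι => (0 : R ⧸ I.1)) I₀ u))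
    have hliftA₀ : ∀ u : K, Ideal.Quotient.mk I₀.1 (liftA u) = u := by
      intro u
      have := congrFun (hliftA u) I₀
      rwa [Function.update_self] at this
    have hliftB₀ : ∀ u : K, Ideal.Quotient.mk I₀.1 (liftB u) = u := by
      intro u
      have := congrFun (hliftB u) I₀
      rwa [Function.update_self] at this
    have hliftA' : ∀ (u : K) (I : ι), I ≠ I₀ → Ideal.Quotient.mk I.1 (liftA u) = 1 := by
      intro u I hI
      have := congrFun (hliftA u) I
      rwa [Function.update_of_ne hI] at this
    have hliftB' : ∀ (u : K) (I : ι), I ≠ I₀ → Ideal.Quotient.mk I.1 (liftB u) = 0 := by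
      intro u I hI
      have := congrFun (hliftB u) I
      rwa [Function.update_of_ne hI] at this
    have hAinj : Function.Injective liftA := by
      intro u u' huu
      rw [← hliftA₀ u, ← hliftA₀ u', huu]
    have hBinj : Function.Injective liftB := by
      intro u u' huu
      rw [← hliftB₀ u, ← hliftB₀ u', huu]
    refine ⟨A'.image liftA, B'.image liftB, ?_, ?_, ?_, ?_⟩
    · rw [Finset.card_image_of_injective _ hAinj, hA'card]
    · rw [Finset.card_image_of_injective _ hBinj, hB'card]
    · rw [Finset.disjoint_left]
      rintro a ha hab
      obtain ⟨u, hu, rfl⟩ := Finset.mem_image.mp ha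
      obtain ⟨w, hw, hww⟩ := Finset.mem_image.mp hab
      have : w = u := by rw [← hliftB₀ w, ← hliftA₀ u, hww]
      subst this
      have : w ∈ (↑F : Set K) := by
        rw [hF]
        push_cast
        left
        exact hw
      exact hA'sub hu this
    · rintro a ha b hb
      obtain ⟨u, hu, rfl⟩ := Finset.mem_image.mp ha
      obtain ⟨w, hw, rfl⟩ := Finset.mem_image.mp hb
      by_contra hnu
      obtain ⟨I, hImax, hmem⟩ := exists_max_ideal_of_mem_nonunits (mem_nonunits_iff.mpr hnu)
      set I' : ι := ⟨I, hImax⟩ with hI'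
      have hzero : Ideal.Quotient.mk I'.1 (liftA u + (s : R) * liftB w) = 0 :=
        Ideal.Quotient.eq_zero_iff_mem.mpr hmem
      rw [map_add, map_mul] at hzero
      rcases eq_or_ne I' I₀ with hcase | hcase
      · rw [hcase] at hzero  -- might need subst
        rw [hliftA₀, hliftB₀] at hzero
        -- u + s̄ w = 0, contradiction with A' avoiding F
        have : u = -(sb * w) := by linear_combination hzero
        have hmemF : u ∈ (↑F : Set K) := by
          rw [hF]
          push_cast
          right
          exact ⟨w, hw, this.symm⟩
        exact hA'sub hu hmemF
      · haveI : Nontrivial (R ⧸ I'.1) := Ideal.Quotient.nontrivial_iff.mpr hImax.ne_top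
        rw [hliftA' u I' hcase, hliftB' w I' hcase, mul_zero, add_zero] at hzero
        exact one_ne_zero hzero
end Aux7
section Aux8
open SimpleGraph CrosscapDef

lemma dart_card_mono {V : Type*} [Finite V] {G H : SimpleGraph V} (hGH : G ≤ H) :
    Nat.card G.Dart ≤ Nat.card H.Dart := by
  have hDf : Finite H.Dart := Finite.of_injective _ Dart.toProd_injective
  exact Nat.card_le_card_of_injective
    (fun d => (⟨d.toProd, hGH d.adj⟩ : H.Dart))
    (fun d d' hdd => Dart.toProd_injective (by
      have := congrArg Dart.toProd hdd
      exact this))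

end Aux8

open CrosscapDef in
/-- If `R` is an Artinian commutative ring whose graph `Γ(R, S)` has finite nonorientable
genus, then `R` is a finite ring. -/
theorem finite_of_crosscap_ne_top {R : Type*} [CommRing R] [IsArtinianRing R] (S : Set Rˣ)
    (hne : S.Nonempty) (hS : S⁻¹ ⊆ S)
    (h : crosscapE (unitGammaGraph R S hS) ≠ ⊤) : Finite R := by
  classical
  by_contra hfin
  haveI : Infinite R := not_finite_iff_infinite.mp hfin
  obtain ⟨s, hsS⟩ := hne
  set Γ := unitGammaGraph R S hS with hΓ
  have hlt : crosscapE Γ < ⊤ := lt_top_iff_ne_top.mpr h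
  set N := (crosscapE Γ).toNat with hNdef
  have hbound : ∀ t : Finset R, crosscap (Γ.induce (↑t : Set R)) ≤ N := by
    intro t
    have h1 : (crosscap (Γ.induce (↑t : Set R)) : ℕ∞) ≤ crosscapE Γ :=
      le_iSup (fun t : Finset R => (crosscap (Γ.induce (↑t : Set R)) : ℕ∞)) t
    have h2 : crosscapE Γ ≤ (N : ℕ∞) := by
      rw [hNdef, ENat.coe_toNat h]
    have h3 := h1.trans h2
    exact_mod_cast h3
  set n := N + 6 with hn
  obtain ⟨A, B, hA, hB, hAB, hunit⟩ := exists_biclique s n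
  set U := A ∪ B with hU
  set G := Γ.induce (↑U : Set R) with hG
  have hadj : ∀ a ∈ A, ∀ b ∈ B, Γ.Adj a b := by
    intro a ha b hb
    have hne' : a ≠ b := fun hab => Finset.disjoint_left.mp hAB ha (hab ▸ hb)
    exact (show a ≠ b ∧ ∃ s ∈ S, ∃ u ∈ (⊤ : Subgroup Rˣ), (u : R) = a + (s : Rˣ) * b from ⟨hne', s, hsS, (hunit a ha b hb).unit, Subgroup.mem_top _,
      ((hunit a ha b hb).unit_spec)⟩)
  have hmemA : ∀ a ∈ A, a ∈ (↑U : Set R) := fun a ha => by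
    simp [hU, Finset.mem_union, ha]
  have hmemB : ∀ b ∈ B, b ∈ (↑U : Set R) := fun b hb => by
    simp [hU, Finset.mem_union, hb]
  -- the vertex type
  haveI : Fintype (↑U : Set R) := FinsetCoe.fintype U
  have hcardV : Nat.card (↑U : Set R) = 2 * n := by
    rw [Nat.card_coe_set_eq, Set.ncard_coe_finset, hU,
      Finset.card_union_of_disjoint hAB, hA, hB]
    ring
  have hcardV' : Fintype.card (↑U : Set R) = 2 * n := by
    rw [Fintype.card_eq_nat_card, hcardV]
  -- the dart injection
  have hGadj : ∀ (a : R) (ha : a ∈ A) (b : R) (hb : b ∈ B),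
      G.Adj ⟨a, hmemA a ha⟩ ⟨b, hmemB b hb⟩ := by
    intro a ha b hb
    exact hadj a ha b hb
  set F : (↥A × ↥B) × Bool → G.Dart := fun p =>
    if hbo : p.2
    then ⟨(⟨p.1.1.1, hmemA _ p.1.1.2⟩, ⟨p.1.2.1, hmemB _ p.1.2.2⟩),
      hGadj _ p.1.1.2 _ p.1.2.2⟩
    else ⟨(⟨p.1.2.1, hmemB _ p.1.2.2⟩, ⟨p.1.1.1, hmemA _ p.1.1.2⟩),
      (hGadj _ p.1.1.2 _ p.1.2.2).symm⟩ with hF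
  have hFinj : Function.Injective F := by
    rintro ⟨⟨a, b⟩, bo⟩ ⟨⟨a', b'⟩, bo'⟩ hpq
    rw [hF] at hpq
    cases bo <;> cases bo' <;> dsimp at hpq
    · have h1 := congrArg (fun d => (d.toProd.1 : R)) hpq
      have h2 := congrArg (fun d => (d.toProd.2 : R)) hpq
      dsimp at h1 h2
      have : b = b' := Subtype.ext h1
      have ha : a = a' := Subtype.ext h2
      subst this; subst ha; rfl
    · have h1 := congrArg (fun d => (d.toProd.1 : R)) hpq
      dsimp at h1
      exact absurd b.2 (fun hb => Finset.disjoint_left.mp hAB (h1 ▸ a'.2) hb)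
    · have h1 := congrArg (fun d => (d.toProd.1 : R)) hpq
      dsimp at h1
      exact absurd b'.2 (fun hb => Finset.disjoint_left.mp hAB (h1.symm ▸ a.2) hb)
    · have h1 := congrArg (fun d => (d.toProd.1 : R)) hpq
      have h2 := congrArg (fun d => (d.toProd.2 : R)) hpq
      dsimp at h1 h2
      have : a = a' := Subtype.ext h1
      have hbb : b = b' := Subtype.ext h2
      subst this; subst hbb; rfl
  haveI : Finite G.Dart := Finite.of_injective _ SimpleGraph.Dart.toProd_injective
  have hDG : 2 * (n * n) ≤ Nat.card G.Dart := by
    have := Nat.card_le_card_of_injective F hFinj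
    rw [Nat.card_prod, Nat.card_prod, Nat.card_eq_finsetCard, Nat.card_eq_finsetCard,
      hA, hB] at this
    simpa [mul_comm, mul_assoc, Nat.card_eq_fintype_card] using this
  -- degree condition
  have hdeg : ∀ v : (↑U : Set R), ∃ w w' : (↑U : Set R), w ≠ w' ∧ G.Adj v w ∧ G.Adj v w' := by
    rintro ⟨v, hv⟩
    have hv' : v ∈ A ∪ B := hv
    rcases Finset.mem_union.mp hv' with hvA | hvB
    · obtain ⟨b₁, hb₁, b₂, hb₂, hbb⟩ := Finset.one_lt_card.mp (by omega : 1 < B.card)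
      refine ⟨⟨b₁, hmemB _ hb₁⟩, ⟨b₂, hmemB _ hb₂⟩, ?_, ?_, ?_⟩
      · intro hcon
        exact hbb (congrArg Subtype.val hcon)
      · exact hadj v hvA b₁ hb₁
      · exact hadj v hvA b₂ hb₂
    · obtain ⟨a₁, ha₁, a₂, ha₂, haa⟩ := Finset.one_lt_card.mp (by omega : 1 < A.card)
      refine ⟨⟨a₁, hmemA _ ha₁⟩, ⟨a₂, hmemA _ ha₂⟩, ?_, ?_, ?_⟩
      · intro hcon
        exact haa (congrArg Subtype.val hcon)
      · exact (hadj a₁ ha₁ v hvB).symm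
      · exact (hadj a₂ ha₂ v hvB).symm
  -- existence of an embedding
  have hDtop : Nat.card G.Dart ≤ Nat.card (⊤ : SimpleGraph (↑U : Set R)).Dart :=
    dart_card_mono le_top
  have hD : 6 * Fintype.card (↑U : Set R) ≤
      9 + Nat.card (⊤ : SimpleGraph (↑U : Set R)).Dart := by
    rw [hcardV']
    have h66 : 6 * n ≤ n * n := Nat.mul_le_mul_right n (by omega)
    omega
  obtain ⟨k0, hk0⟩ := exists_embedsWithCrosscaps G (by rw [hcardV']; omega) hD
  have hmem : EmbedsWithCrosscaps G (crosscap G) :=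
    Nat.sInf_mem (⟨k0, hk0⟩ : {k | EmbedsWithCrosscaps G k}.Nonempty)
  have hlow := le_of_embedsWithCrosscaps hdeg hmem
  have hcc : crosscap G ≤ N := hbound U
  rw [hcardV] at hlow
  have h66 : n * n = N * N + 12 * N + 36 := by rw [hn]; ring
  omega
end

section
/- Let R be an Artinian commutative ring whose co-maximal graph C_Γ(R) has finite nonorientable genus. Then R is a finite ring. -/
namespace CrosscapProof
open CrosscapDef SimpleGraph

variable {V : Type*} [Fintype V] [DecidableEq V]

/-- A cyclic permutation of `{v}ᶜ` for each vertex. -/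
noncomputable def cyc (v : V) : Equiv.Perm V := (Finset.exists_cycleOn ({v}ᶜ : Finset V)).choose

lemma cyc_isCycleOn (v : V) : (cyc v).IsCycleOn (({v}ᶜ : Finset V) : Set V) :=
  (Finset.exists_cycleOn ({v}ᶜ : Finset V)).choose_spec.1

lemma cyc_fix (v : V) : cyc v v = v := by
  by_contra hv
  have := (Finset.exists_cycleOn ({v}ᶜ : Finset V)).choose_spec.2
    (Equiv.Perm.mem_support.mpr hv)
  simp [cyc] at this

lemma cyc_ne (v : V) {w : V} (h : w ≠ v) : cyc v w ≠ v := fun hc => by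
  exact h ((cyc v).injective (by rw [hc, cyc_fix]))

lemma cyc_inv_ne (v : V) {w : V} (h : w ≠ v) : (cyc v)⁻¹ w ≠ v := fun hc => by
  apply h
  have := congrArg (cyc v) hc
  rw [show (cyc v) ((cyc v)⁻¹ w) = w from (cyc v).apply_symm_apply w, cyc_fix] at this
  exact this

/-- The rotation permutation on darts of the complete graph. -/
noncomputable def topRot : Equiv.Perm (⊤ : SimpleGraph V).Dart where
  toFun d := ⟨(d.toProd.1, cyc d.toProd.1 d.toProd.2), (cyc_ne _ (d.adj.symm)).symm⟩
  invFun d := ⟨(d.toProd.1, (cyc d.toProd.1)⁻¹ d.toProd.2), (cyc_inv_ne _ (d.adj.symm)).symm⟩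
  left_inv d := SimpleGraph.Dart.ext _ _ (by simp)
  right_inv d := SimpleGraph.Dart.ext _ _ (by simp)

lemma topRot_pow (k : ℕ) (d : (⊤ : SimpleGraph V).Dart) :
    ((topRot ^ k) d).toProd = (d.toProd.1, ((cyc d.toProd.1) ^ k) d.toProd.2) := by
  induction k generalizing d with
  | zero => simp
  | succ n ih =>
    rw [pow_succ, pow_succ]
    simp only [Equiv.Perm.mul_apply]
    rw [ih (topRot d)]
    rfl

/-- An explicit scheme for the complete graph. -/
noncomputable def topScheme : Scheme (⊤ : SimpleGraph V) where
  rot := topRot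
  rot_fst d := rfl
  rot_single d e h := by
    have hd : d.toProd.2 ∈ (({d.toProd.1}ᶜ : Finset V) : Set V) := by
      simp only [Finset.coe_compl, Finset.coe_singleton, Set.mem_compl_iff,
        Set.mem_singleton_iff]
      exact d.adj.symm
    have he : e.toProd.2 ∈ (({d.toProd.1}ᶜ : Finset V) : Set V) := by
      simp only [Finset.coe_compl, Finset.coe_singleton, Set.mem_compl_iff,
        Set.mem_singleton_iff]
      rw [h]; exact e.adj.symm
    have hsc : (cyc d.toProd.1).SameCycle d.toProd.2 e.toProd.2 :=
      (cyc_isCycleOn d.toProd.1).2 hd he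
    obtain ⟨i, _, hi⟩ := hsc.exists_pow_eq'
    refine ⟨(i : ℤ), ?_⟩
    rw [zpow_natCast]
    apply SimpleGraph.Dart.ext
    rw [topRot_pow, Prod.ext_iff]
    exact ⟨h, hi⟩
  sgn _ := true
  sgn_symm _ := rfl


section FacePerm

variable {W : Type*} {G : SimpleGraph W}

lemma rot_fst' (σ : Scheme G) (d : G.Dart) : (σ.rot.symm d).toProd.1 = d.toProd.1 := by
  conv_rhs => rw [← Equiv.apply_symm_apply σ.rot d]
  exact (σ.rot_fst _).symm

lemma facePerm_eq (σ : Scheme G) (d : G.Dart) (s : Bool) :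
    σ.facePerm (d, s) = (cond (xor s (σ.sgn d)) (σ.rot d.symm) (σ.rot.symm d.symm),
      xor s (σ.sgn d)) := rfl

lemma facePerm_fst (σ : Scheme G) (p : G.Dart × Bool) :
    ((σ.facePerm p).1).toProd.1 = p.1.toProd.2 := by
  obtain ⟨d, s⟩ := p
  rw [facePerm_eq]
  cases xor s (σ.sgn d) <;>
    simp [rot_fst', σ.rot_fst]

lemma facePerm_ne (σ : Scheme G) (p : G.Dart × Bool) : σ.facePerm p ≠ p := by
  intro h
  have h1 := facePerm_fst σ p
  rw [h] at h1
  exact p.1.adj.ne h1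

end FacePerm

lemma facePerm_facePerm_ne (σ : Scheme (⊤ : SimpleGraph V)) (h3 : 3 ≤ Fintype.card V)
    (p : (⊤ : SimpleGraph V).Dart × Bool) : σ.facePerm (σ.facePerm p) ≠ p := by
  classical
  intro hp
  obtain ⟨d, s⟩ := p
  set e := (σ.facePerm (d, s)).1 with he_def
  have hq1 : e.toProd.1 = d.toProd.2 := facePerm_fst σ (d, s)
  have hq2 : d.toProd.1 = e.toProd.2 := by
    have h2 := facePerm_fst σ (σ.facePerm (d, s))
    have h3 : σ.facePerm (σ.facePerm (d, s)) = (d, s) := hp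
    rw [h3] at h2
    exact h2
  have he : e = d.symm := by
    apply SimpleGraph.Dart.ext
    rw [SimpleGraph.Dart.symm_toProd, Prod.ext_iff]
    exact ⟨by simpa using hq1, by simpa using hq2.symm⟩
  have hcond : e = cond (xor s (σ.sgn d)) (σ.rot d.symm) (σ.rot.symm d.symm) := by
    rw [he_def, facePerm_eq]
  have hfix : σ.rot d.symm = d.symm := by
    rw [he] at hcond
    cases hxs : xor s (σ.sgn d) <;> rw [hxs] at hcond
    · rw [cond_false] at hcond
      conv_lhs => rw [hcond]
      rw [Equiv.apply_symm_apply]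
    · rw [cond_true] at hcond
      exact hcond.symm
  have hex : ∃ w : V, w ≠ d.toProd.1 ∧ w ≠ d.toProd.2 := by
    by_contra hcon
    push_neg at hcon
    have hsub : (Finset.univ : Finset V) ⊆ {d.toProd.1, d.toProd.2} := by
      intro w _
      simp only [Finset.mem_insert, Finset.mem_singleton]
      by_cases hw : w = d.toProd.1
      · exact Or.inl hw
      · exact Or.inr (hcon w hw)
    have hle := Finset.card_le_card hsub
    have h2 : ({d.toProd.1, d.toProd.2} : Finset V).card ≤ 2 :=
      (Finset.card_insert_le _ _).trans (by simp)
    rw [Finset.card_univ] at hle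
    omega
  obtain ⟨w, hw1, hw2⟩ := hex
  have hadj : (⊤ : SimpleGraph V).Adj d.toProd.2 w := by
    simp only [SimpleGraph.top_adj]
    exact hw2.symm
  set f : (⊤ : SimpleGraph V).Dart := ⟨(d.toProd.2, w), hadj⟩ with hf
  have hsc := σ.rot_single d.symm f (by simp [hf, SimpleGraph.Dart.symm_toProd])
  obtain ⟨i, hi⟩ := hsc
  have hfix2 : (σ.rot ^ i) d.symm = d.symm :=
    Function.IsFixedPt.perm_zpow hfix i
  rw [hfix2] at hi
  apply hw1
  have := congrArg (fun d : (⊤ : SimpleGraph V).Dart => d.toProd.2) hi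
  simpa [hf, SimpleGraph.Dart.symm_toProd] using this.symm


lemma three_mul_cycleCount_le {α : Type*} [Fintype α] (f : Equiv.Perm α)
    (h1 : ∀ p, f p ≠ p) (h2 : ∀ p, f (f p) ≠ p) :
    3 * cycleCount f ≤ Fintype.card α := by
  classical
  set sd : Setoid α := Setoid.mk f.SameCycle
    ⟨fun _ => Equiv.Perm.SameCycle.rfl, Equiv.Perm.SameCycle.symm,
      Equiv.Perm.SameCycle.trans⟩ with hsd
  letI : Fintype (Quotient sd) := Fintype.ofFinite _
  have hcard : cycleCount f = Fintype.card (Quotient sd) := by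
    rw [cycleCount, Nat.card_eq_fintype_card]
  have hfib : ∀ q : Quotient sd, 3 ≤ Fintype.card {p // Quotient.mk sd p = q} := by
    intro q
    obtain ⟨p, rfl⟩ := Quotient.exists_rep q
    have m1 : Quotient.mk sd (f p) = Quotient.mk sd p :=
      Quotient.sound (Equiv.Perm.SameCycle.symm ⟨1, by simp⟩)
    have m2 : Quotient.mk sd (f (f p)) = Quotient.mk sd p :=
      Quotient.sound (Equiv.Perm.SameCycle.symm ⟨2, by rw [show (2:ℤ) = 1+1 from rfl, zpow_add, zpow_one, Equiv.Perm.mul_apply]⟩)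
    set a : {x // Quotient.mk sd x = Quotient.mk sd p} := ⟨p, rfl⟩
    set b : {x // Quotient.mk sd x = Quotient.mk sd p} := ⟨f p, m1⟩
    set c : {x // Quotient.mk sd x = Quotient.mk sd p} := ⟨f (f p), m2⟩
    have hab : a ≠ b := fun h => h1 p (congrArg Subtype.val h).symm
    have hbc : b ≠ c := fun h => h1 (f p) (congrArg Subtype.val h).symm
    have hac : a ≠ c := fun h => h2 p (congrArg Subtype.val h).symm
    have hcard3 : ({a, b, c} : Finset _).card = 3 := by
      rw [Finset.card_insert_of_notMem (by simp [hab, hac]),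
        Finset.card_insert_of_notMem (by simp [hbc]), Finset.card_singleton]
    calc 3 = ({a, b, c} : Finset _).card := hcard3.symm
      _ ≤ _ := Finset.card_le_univ _
  have hsum : Fintype.card α = ∑ q : Quotient sd, Fintype.card {p // Quotient.mk sd p = q} := by
    rw [← Fintype.card_sigma]
    exact (Fintype.card_congr (Equiv.sigmaFiberEquiv (Quotient.mk sd))).symm
  rw [hcard, hsum]
  calc 3 * Fintype.card (Quotient sd) = ∑ _q : Quotient sd, 3 := by
        rw [Finset.sum_const, Finset.card_univ, smul_eq_mul, mul_comm]
    _ ≤ _ := Finset.sum_le_sum fun q _ => hfib q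

lemma card_dart_top : Nat.card (⊤ : SimpleGraph V).Dart
    = Fintype.card V * (Fintype.card V - 1) := by
  classical
  have e : (⊤ : SimpleGraph V).Dart ≃ Σ v : V, {w : V // w ≠ v} :=
    { toFun := fun d => ⟨d.toProd.1, d.toProd.2, d.adj.ne'⟩
      invFun := fun x => ⟨(x.1, x.2.1), by simp only [SimpleGraph.top_adj]; exact Ne.symm x.2.2⟩
      left_inv := fun d => SimpleGraph.Dart.ext _ _ rfl
      right_inv := fun x => rfl }
  rw [Nat.card_eq_fintype_card, Fintype.card_congr e, Fintype.card_sigma]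
  have : ∀ v : V, Fintype.card {w : V // w ≠ v} = Fintype.card V - 1 := by
    intro v
    simpa using Set.card_ne_eq v
  simp only [this, Finset.sum_const, Finset.card_univ, smul_eq_mul]


lemma eulerGenus_ge (h13 : 13 ≤ Fintype.card V) (σ : Scheme (⊤ : SimpleGraph V)) :
    (Fintype.card V : ℤ) ≤ σ.eulerGenus := by
  classical
  set n := Fintype.card V with hn
  have hD : Nat.card (⊤ : SimpleGraph V).Dart = n * (n - 1) := card_dart_top
  haveI : Finite (⊤ : SimpleGraph V).Dart :=
    Finite.of_injective (fun d => d.toProd) (fun a b h => SimpleGraph.Dart.ext a b h)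
  letI : Fintype (⊤ : SimpleGraph V).Dart := Fintype.ofFinite _
  have hΩ : Fintype.card ((⊤ : SimpleGraph V).Dart × Bool) = 2 * (n * (n - 1)) := by
    rw [Fintype.card_prod, Fintype.card_bool, ← Nat.card_eq_fintype_card, hD]; ring
  have hC : 3 * cycleCount σ.facePerm ≤ 2 * (n * (n - 1)) := by
    rw [← hΩ]
    exact three_mul_cycleCount_le _ (facePerm_ne σ) (facePerm_facePerm_ne σ (by omega))
  have hF : 2 * σ.faceCount ≤ cycleCount σ.facePerm := by
    have := Nat.div_mul_le_self (cycleCount σ.facePerm) 2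
    rw [Scheme.faceCount]
    omega
  obtain ⟨k, hk⟩ : Even (n * (n - 1)) := by
    have h1 : Even ((n - 1) * ((n - 1) + 1)) := Nat.even_mul_succ_self (n - 1)
    have h2 : (n - 1) + 1 = n := by omega
    rw [h2, mul_comm] at h1
    exact h1
  have h12 : 12 * n ≤ n * (n - 1) := by
    calc 12 * n = n * 12 := by ring
      _ ≤ n * (n - 1) := Nat.mul_le_mul_left _ (by omega)
  have hhalf : n * (n - 1) / 2 = k := by omega
  have hG : σ.eulerGenus = 2 - (n : ℤ) + (k : ℤ) - (σ.faceCount : ℤ) := by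
    rw [Scheme.eulerGenus, hD, hhalf, Nat.card_eq_fintype_card]
  rw [hG]
  omega


lemma exists_third {a b : V} (h3 : 3 ≤ Fintype.card V) :
    ∃ c : V, c ≠ a ∧ c ≠ b := by
  classical
  by_contra hcon
  push_neg at hcon
  have hsub : (Finset.univ : Finset V) ⊆ {a, b} := by
    intro w _
    simp only [Finset.mem_insert, Finset.mem_singleton]
    by_cases hw : w = a
    · exact Or.inl hw
    · exact Or.inr (hcon w hw)
  have hle := Finset.card_le_card hsub
  have h2 : ({a, b} : Finset V).card ≤ 2 := (Finset.card_insert_le _ _).trans (by simp)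
  rw [Finset.card_univ] at hle
  omega

lemma crosscap_top_ge (h13 : 13 ≤ Fintype.card V) :
    Fintype.card V ≤ crosscap (⊤ : SimpleGraph V) := by
  classical
  have hglb := eulerGenus_ge h13 (topScheme (V := V))
  have h0 : (0 : ℤ) ≤ (topScheme (V := V)).eulerGenus :=
    le_trans (by positivity) hglb
  have hne : {k : ℕ | EmbedsWithCrosscaps (⊤ : SimpleGraph V) k}.Nonempty := by
    refine ⟨(topScheme (V := V)).eulerGenus.toNat, ⊤, le_refl _, ?_, topScheme, ?_, ?_⟩
    · intro u v
      by_cases huv : u = v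
      · rw [huv]
      · exact SimpleGraph.Adj.reachable (by simp [huv])
    · exact (Int.toNat_of_nonneg h0).symm
    · right
      rintro ⟨f, hf⟩
      obtain ⟨a, b, hab⟩ := Fintype.exists_pair_of_one_lt_card (α := V) (by omega)
      obtain ⟨c, hca, hcb⟩ := exists_third (a := a) (b := b) (by omega)
      have h1 := hf ⟨(a, b), by simpa using hab⟩
      have h2 := hf ⟨(b, c), by simpa using hcb.symm⟩
      have h3 := hf ⟨(a, c), by simpa using hca.symm⟩
      simp only [topScheme] at h1 h2 h3
      cases hfa : f a <;> cases hfb : f b <;> cases hfc : f c <;>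
        rw [hfa, hfb] at h1 <;> rw [hfb, hfc] at h2 <;> rw [hfa, hfc] at h3 <;>
        simp at h1 h2 h3
  have hmem := Nat.sInf_mem hne
  obtain ⟨H, hGH, hconn, σ, hgen, _⟩ := hmem
  have hH : H = ⊤ := le_antisymm le_top hGH
  subst hH
  have hge := eulerGenus_ge h13 σ
  rw [hgen] at hge
  exact_mod_cast hge


section Ring

variable {R : Type*} [CommRing R] [IsArtinianRing R]


lemma isUnit_of_mk_isUnit {x : R} (h : IsUnit (Ideal.Quotient.mk (nilradical R) x)) :
    IsUnit x := by
  obtain ⟨y, hy⟩ := isUnit_iff_exists_inv.mp h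
  obtain ⟨z, rfl⟩ := Ideal.Quotient.mk_surjective y
  have : x * z - 1 ∈ nilradical R := by
    rw [← Ideal.Quotient.eq_zero_iff_mem]
    simp [map_mul, hy, sub_eq_zero]
  have hu : IsUnit (x * z) := by
    have := IsNilpotent.isUnit_add_one (this : IsNilpotent (x * z - 1))
    simpa using this
  exact isUnit_of_mul_isUnit_left hu

lemma finite_ring_of_finite_units (h : Finite Rˣ) : Finite R := by
  classical
  -- nilradical is finite
  have hN : Finite (nilradical R : Set R) := by
    have : Function.Injective (fun a : (nilradical R : Set R) =>
        ((IsNilpotent.isUnit_one_add a.2).unit : Rˣ)) := by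
      intro a b hab
      have : (1 : R) + a = 1 + b := by
        have := congrArg (Units.val) hab
        simpa using this
      exact Subtype.ext (by linear_combination this)
    exact Finite.of_injective _ this
  -- quotient by nilradical has finite units
  set Q := R ⧸ nilradical R
  have hQu : Finite Qˣ := by
    have hsurj : Function.Surjective (Units.map (Ideal.Quotient.mk (nilradical R)).toMonoidHom) := by
      intro u
      obtain ⟨x, hx⟩ := Ideal.Quotient.mk_surjective (u : Q)
      have hxu : IsUnit x := isUnit_of_mk_isUnit (by rw [hx]; exact u.isUnit)
      refine ⟨hxu.unit, Units.ext ?_⟩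
      simpa using hx
    exact Finite.of_surjective _ hsurj
  -- Q is a finite product of fields with finite unit groups, hence finite
  have hQ : Finite Q := by
    set e := IsArtinianRing.quotNilradicalEquivPi R
    have : Finite ((I : MaximalSpectrum R) → R ⧸ I.asIdeal)ˣ :=
      Finite.of_equiv _ (Units.mapEquiv e.toMulEquiv).toEquiv
    have hfin : Finite (MaximalSpectrum R) := inferInstance
    have hfield : ∀ I : MaximalSpectrum R, Finite (R ⧸ I.asIdeal) := by
      intro I
      letI : Field (R ⧸ I.asIdeal) := IsArtinianRing.fieldOfSubtypeIsMaximal R I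
      have h1 : Finite (R ⧸ I.asIdeal)ˣ := by
        have : Function.Injective
            (Units.map (MonoidHom.mulSingle (fun I : MaximalSpectrum R =>
              R ⧸ I.asIdeal) I)) := by
          intro a b hab
          have := congrArg (fun u : ((J : MaximalSpectrum R) → R ⧸ J.asIdeal)ˣ =>
            u.val I) hab
          simp [Units.map] at this
          exact Units.ext this
        exact Finite.of_injective _ this
      have h2 : Finite {a : R ⧸ I.asIdeal // a ≠ 0} :=
        Finite.of_equiv _ unitsEquivNeZero
      have : (Set.univ : Set (R ⧸ I.asIdeal)) = {0} ∪ {a | a ≠ 0} := by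
        ext a; by_cases ha : a = 0 <;> simp [ha]
      have hfin : (Set.univ : Set (R ⧸ I.asIdeal)).Finite := by
        rw [this]
        refine (Set.finite_singleton 0).union ?_
        have : Finite ↥{a : R ⧸ I.asIdeal | a ≠ 0} := h2
        exact Set.toFinite _
      exact Set.finite_univ_iff.mp hfin
    exact Finite.of_equiv _ e.symm.toEquiv
  -- R finite since fibers of mk are cosets of the finite nilradical
  have : ∀ q : Q, Finite {x : R // Ideal.Quotient.mk (nilradical R) x = q} := by
    intro q
    obtain ⟨x₀, hx₀⟩ := Ideal.Quotient.mk_surjective q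
    have : Function.Injective (fun x : {x : R // Ideal.Quotient.mk (nilradical R) x = q} =>
        (⟨x.1 - x₀, by rw [SetLike.mem_coe, ← Ideal.Quotient.eq_zero_iff_mem]; simp [x.2, hx₀]⟩ :
          (nilradical R : Set R))) := by
      intro a b hab
      have := congrArg Subtype.val hab
      simp only at this
      exact Subtype.ext (by linear_combination this)
    exact Finite.of_injective _ this
  exact Finite.of_equiv _ (Equiv.sigmaFiberEquiv (Ideal.Quotient.mk (nilradical R) : R → Q))


lemma induce_units_eq_top (s : Finset R) (hs : ∀ x ∈ s, IsUnit x) :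
    (comaximalGraph R).induce (↑s : Set R) = ⊤ := by
  ext a b
  show (comaximalGraph R).Adj ↑a ↑b ↔ _
  rw [SimpleGraph.top_adj]
  constructor
  · intro hadj
    exact fun hab => (show (a : R) ≠ b ∧ Ideal.span {(a : R)} ⊔ Ideal.span {(b : R)} = ⊤ from hadj).1 (congrArg Subtype.val hab)
  · intro hab
    refine (show (a : R) ≠ b ∧ Ideal.span {(a : R)} ⊔ Ideal.span {(b : R)} = ⊤ from ⟨fun hc => hab (Subtype.ext hc), ?_⟩)
    rw [Ideal.span_singleton_eq_top.mpr (hs _ a.2), top_sup_eq]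

end Ring

end CrosscapProof


open CrosscapDef in
/-- If `R` is an Artinian commutative ring whose co-maximal graph has finite nonorientable
genus, then `R` is a finite ring. -/
theorem finite_of_comaximal_crosscap_ne_top {R : Type*} [CommRing R] [IsArtinianRing R]
    (h : crosscapE (comaximalGraph R) ≠ ⊤) : Finite R := by
  classical
  by_contra hfin
  rw [not_finite_iff_infinite] at hfin
  haveI : Infinite Rˣ := by
    by_contra hinf
    rw [not_infinite_iff_finite] at hinf
    exact not_finite_iff_infinite.mpr hfin (CrosscapProof.finite_ring_of_finite_units hinf)
  apply h
  rw [crosscapE, iSup_eq_top]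
  intro b hb
  lift b to ℕ using hb.ne
  set n := max 13 (b + 1) with hn
  obtain ⟨t, ht⟩ := Infinite.exists_subset_card_eq Rˣ n
  set s := t.image (Units.val) with hsdef
  have hcard : s.card = n := by
    rw [hsdef, Finset.card_image_of_injective t Units.val_injective, ht]
  have hs : ∀ x ∈ s, IsUnit x := by
    intro x hx
    obtain ⟨u, _, rfl⟩ := Finset.mem_image.mp hx
    exact u.isUnit
  refine ⟨s, ?_⟩
  rw [CrosscapProof.induce_units_eq_top s hs]
  letI : Fintype ↥(↑s : Set R) := s.finite_toSet.fintype
  have hcard2 : Fintype.card ↥(↑s : Set R) = n := by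
    rw [← Nat.card_eq_fintype_card, Nat.card_coe_set_eq, Set.ncard_coe_finset, hcard]
  have hge := CrosscapProof.crosscap_top_ge (V := ↥(↑s : Set R)) (by rw [hcard2]; exact le_max_left _ _)
  rw [hcard2] at hge
  have hmn : b < n := lt_of_lt_of_le (Nat.lt_succ_self b) (le_max_right _ _)
  exact_mod_cast lt_of_lt_of_le hmn hge
end
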